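/- If K is closed at infinity, then a polynomial p is nonnegative on K if and only if its homogenization p̃ is nonnegative on the compact set K̃ = {(x₀,x) : x₀ ≥ 0, x₀² + ‖x‖² = 1, c̃_i(x₀,x) = 0 (i ∈ E), c̃_j(x₀,x) ≥ 0 (j ∈ I)}. -/

import Mathlib

open MvPolynomial

/-- Evaluation at `(x₀, x)` of the homogenization `p̃(x₀,x) = x₀^{deg p} p(x/x₀)` of `p`,
given by `∑_α p_α x₀^{deg p − |α|} x^α`. -/
noncomputable def homEval {n : ℕ} (p : MvPolynomial (Fin n) ℝ) (x₀ : ℝ) (x : Fin n → ℝ) : ℝ :=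
  ∑ α ∈ p.support, p.coeff α * x₀ ^ (p.totalDegree - α.sum fun _ e => e) * ∏ i, x i ^ α i

/-- The semialgebraic set `K = {x : c_i(x) = 0 (i ∈ E), c_j(x) ≥ 0 (j ∈ I)}`. -/
def semiSet {n : ℕ} {ι : Type*} (E I : Set ι) (g : ι → MvPolynomial (Fin n) ℝ) :
    Set (Fin n → ℝ) :=
  {x | (∀ i ∈ E, eval x (g i) = 0) ∧ (∀ j ∈ I, 0 ≤ eval x (g j))}

/-- The homogenized cone `K̃^c` with strictly positive `x₀`-coordinate. -/
def tildeC {n : ℕ} {ι : Type*} (E I : Set ι) (g : ι → MvPolynomial (Fin n) ℝ) :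
    Set (ℝ × (Fin n → ℝ)) :=
  {z | 0 < z.1 ∧ (∀ i ∈ E, homEval (g i) z.1 z.2 = 0) ∧ (∀ j ∈ I, 0 ≤ homEval (g j) z.1 z.2)}

/-- The homogenized cone `K̃^h` with nonnegative `x₀`-coordinate. -/
def tildeH {n : ℕ} {ι : Type*} (E I : Set ι) (g : ι → MvPolynomial (Fin n) ℝ) :
    Set (ℝ × (Fin n → ℝ)) :=
  {z | 0 ≤ z.1 ∧ (∀ i ∈ E, homEval (g i) z.1 z.2 = 0) ∧ (∀ j ∈ I, 0 ≤ homEval (g j) z.1 z.2)}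

/-- `K` is closed at infinity: `cl(K̃^c) = K̃^h`. -/
def closedAtInfty {n : ℕ} {ι : Type*} (E I : Set ι) (g : ι → MvPolynomial (Fin n) ℝ) : Prop :=
  closure (tildeC E I g) = tildeH E I g

/-- The compact homogenized set `K̃ = K̃^h ∩ {x₀² + ‖x‖² = 1}`. -/
def tildeK {n : ℕ} {ι : Type*} (E I : Set ι) (g : ι → MvPolynomial (Fin n) ℝ) :
    Set (ℝ × (Fin n → ℝ)) :=
  tildeH E I g ∩ {z | z.1 ^ 2 + ∑ i, z.2 i ^ 2 = 1}


lemma homEval_smul {n : ℕ} (p : MvPolynomial (Fin n) ℝ) (l x₀ : ℝ) (x : Fin n → ℝ) :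
    homEval p (l * x₀) (fun i => l * x i) = l ^ p.totalDegree * homEval p x₀ x := by
  unfold homEval
  rw [Finset.mul_sum]
  refine Finset.sum_congr rfl fun α hα => ?_
  have hle : (α.sum fun _ e => e) ≤ p.totalDegree := le_totalDegree hα
  have hsum : (α.sum fun _ e => e) = ∑ i, α i := by
    rw [Finsupp.sum_fintype]; intro i; rfl
  have h1 : ∏ i, (l * x i) ^ α i = l ^ (∑ i, α i) * ∏ i, x i ^ α i := by
    rw [← Finset.prod_pow_eq_pow_sum, ← Finset.prod_mul_distrib]
    exact Finset.prod_congr rfl fun i _ => (mul_pow _ _ _)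
  calc p.coeff α * (l * x₀) ^ (p.totalDegree - α.sum fun _ e => e) *
        ∏ i, (l * x i) ^ α i
      = l ^ ((p.totalDegree - α.sum fun _ e => e) + α.sum fun _ e => e) *
        (p.coeff α * x₀ ^ (p.totalDegree - α.sum fun _ e => e) * ∏ i, x i ^ α i) := by
        rw [mul_pow, h1, ← hsum, pow_add]; ring
    _ = _ := by rw [Nat.sub_add_cancel hle]

lemma homEval_one {n : ℕ} (p : MvPolynomial (Fin n) ℝ) (x : Fin n → ℝ) :
    homEval p 1 x = eval x p := by
  unfold homEval
  rw [eval_eq']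
  exact Finset.sum_congr rfl fun α _ => by rw [one_pow, mul_one]

lemma homEval_scale {n : ℕ} (p : MvPolynomial (Fin n) ℝ) (l : ℝ) (x : Fin n → ℝ) :
    homEval p l (fun i => l * x i) = l ^ p.totalDegree * eval x p := by
  have := homEval_smul p l 1 x
  simpa [homEval_one] using this

lemma homEval_continuous {n : ℕ} (p : MvPolynomial (Fin n) ℝ) :
    Continuous fun z : ℝ × (Fin n → ℝ) => homEval p z.1 z.2 := by
  unfold homEval
  fun_prop

/-- if `K` is closed at infinity, then `p ≥ 0` on `K` iff its homogenization
`p̃` is nonnegative on the compact set `K̃`. -/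
theorem stmt9 {n : ℕ} {ι : Type*} (E I : Set ι) (g : ι → MvPolynomial (Fin n) ℝ)
    (hinf : closedAtInfty E I g) (p : MvPolynomial (Fin n) ℝ) :
    (∀ x ∈ semiSet E I g, 0 ≤ eval x p) ↔
      ∀ z ∈ tildeK E I g, 0 ≤ homEval p z.1 z.2 := by
  constructor
  · -- p ≥ 0 on K ⇒ p̃ ≥ 0 on K̃
    intro h z hz
    have hzH : z ∈ tildeH E I g := hz.1
    rw [← hinf] at hzH
    have hsub : tildeC E I g ⊆ {z : ℝ × (Fin n → ℝ) | 0 ≤ homEval p z.1 z.2} := by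
      rintro w ⟨hw0, hwE, hwI⟩
      set x : Fin n → ℝ := fun i => w.2 i / w.1 with hx
      have hwx : ∀ i, w.2 i = w.1 * x i := fun i => by
        show w.2 i = w.1 * (w.2 i / w.1)
        rw [mul_div_assoc']; exact (mul_div_cancel_left₀ _ (ne_of_gt hw0)).symm
      have key : ∀ q : MvPolynomial (Fin n) ℝ,
          homEval q w.1 w.2 = w.1 ^ q.totalDegree * eval x q := by
        intro q
        have : homEval q w.1 w.2 = homEval q w.1 (fun i => w.1 * x i) := by
          congr 1
          funext i; exact hwx i
        rw [this, homEval_scale]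
      have hxK : x ∈ semiSet E I g := by
        constructor
        · intro i hi
          have := hwE i hi
          rw [key] at this
          have hpos : (0:ℝ) < w.1 ^ (g i).totalDegree := pow_pos hw0 _
          exact (mul_eq_zero.mp this).resolve_left (ne_of_gt hpos)
        · intro j hj
          have := hwI j hj
          rw [key] at this
          have hpos : (0:ℝ) < w.1 ^ (g j).totalDegree := pow_pos hw0 _
          exact nonneg_of_mul_nonneg_right this hpos
      have := h x hxK
      show 0 ≤ homEval p w.1 w.2
      rw [key p]
      positivity
    have hcl : IsClosed {z : ℝ × (Fin n → ℝ) | 0 ≤ homEval p z.1 z.2} :=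
      isClosed_le continuous_const (homEval_continuous p)
    exact (closure_minimal hsub hcl) hzH
  · -- p̃ ≥ 0 on K̃ ⇒ p ≥ 0 on K
    intro h x hx
    set S : ℝ := 1 + ∑ i, x i ^ 2 with hS
    have hSpos : 0 < S := by positivity
    set l : ℝ := (Real.sqrt S)⁻¹ with hl
    have hlpos : 0 < l := inv_pos.mpr (Real.sqrt_pos.mpr hSpos)
    set z : ℝ × (Fin n → ℝ) := (l, fun i => l * x i) with hz
    have hzK : z ∈ tildeK E I g := by
      refine ⟨⟨le_of_lt hlpos, ?_, ?_⟩, ?_⟩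
      · intro i hi
        show homEval (g i) l (fun i => l * x i) = 0
        rw [homEval_scale, hx.1 i hi, mul_zero]
      · intro j hj
        show 0 ≤ homEval (g j) l (fun i => l * x i)
        rw [homEval_scale]
        have := hx.2 j hj
        positivity
      · show l ^ 2 + ∑ i, (l * x i) ^ 2 = 1
        have : l ^ 2 + ∑ i, (l * x i) ^ 2 = l ^ 2 * S := by
          rw [hS, mul_add, mul_one, Finset.mul_sum]
          congr 1
          exact Finset.sum_congr rfl fun i _ => by ring
        rw [this, hl]
        rw [inv_pow, Real.sq_sqrt (le_of_lt hSpos)]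
        exact inv_mul_cancel₀ (ne_of_gt hSpos)
    have := h z hzK
    have hev : homEval p z.1 z.2 = l ^ p.totalDegree * eval x p := homEval_scale p l x
    rw [hev] at this
    exact nonneg_of_mul_nonneg_right this (pow_pos hlpos _)
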